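/- There is an absolute constant C₀ such that the following holds. Let N ≥ 1, let a : ℕ → ℂ satisfy |a(n)| ≤ 1 for all n, let K ≥ 2, let θ₁, …, θ_{K−1} ∈ ℝ, and let c₁, …, c_{K−1} be real numbers with |c_k| ≤ C for all k, where C ≥ 1. Then |∑_{n ≤ N} a(n) e(∑_{k=1}^{K−1} 2 c_k cos(2π n θ_k))| ≤ (C₀ C²)^{K−1} · sup_{(l₁, …, l_{K−1}) ∈ ℤ^{K−1}} |∑_{n ≤ N} a(n) e(n (l₁ θ₁ + ⋯ + l_{K−1} θ_{K−1}))|. -/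

import Mathlib

set_option maxHeartbeats 1000000

open Complex

noncomputable def e (x : ℝ) : ℂ := Complex.exp (2 * Real.pi * Complex.I * x)

lemma e_norm (x : ℝ) : ‖e x‖ = 1 := by
  have h : (2 * (Real.pi:ℂ) * Complex.I * x) = ((2 * Real.pi * x : ℝ) : ℂ) * Complex.I := by
    push_cast; ring
  rw [e, h, Complex.norm_exp_ofReal_mul_I]

lemma e_add (x y : ℝ) : e (x + y) = e x * e y := by
  rw [e, e, e, ← Complex.exp_add]; push_cast; ring_nf

noncomputable def zc (c : ℝ) : ℂ := 2 * Real.pi * Complex.I * c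

lemma zc_norm (c : ℝ) : ‖zc c‖ = 2 * Real.pi * |c| := by
  rw [zc]
  rw [norm_mul, norm_mul, norm_mul]
  simp only [Complex.norm_real, Real.norm_eq_abs, Complex.norm_I, Complex.norm_ofNat]
  rw [_root_.abs_of_nonneg Real.pi_pos.le, mul_one]

noncomputable def B (c : ℝ) (n : ℕ) : ℂ :=
  ∑' j : ℕ, zc c ^ (2 * j + n) / ((j.factorial : ℂ) * ((j + n).factorial : ℂ))

lemma Bterm_norm (c : ℝ) (n j : ℕ) :
    ‖zc c ^ (2 * j + n) / ((j.factorial : ℂ) * ((j + n).factorial : ℂ))‖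
      = ‖zc c‖ ^ (2 * j + n) / (j.factorial * (j + n).factorial) := by
  rw [norm_div, norm_pow]
  congr 1
  rw [norm_mul]
  simp [Complex.norm_natCast]

lemma summable_Bterm_norm (c : ℝ) (n : ℕ) :
    Summable (fun j : ℕ =>
      ‖zc c ^ (2 * j + n) / ((j.factorial : ℂ) * ((j + n).factorial : ℂ))‖) := by
  refine Summable.of_nonneg_of_le (fun j => norm_nonneg _)
    (fun j => ?_) ((Real.summable_pow_div_factorial (‖zc c‖ ^ 2)).mul_left (‖zc c‖ ^ n))
  rw [Bterm_norm]
  rw [div_le_iff₀ (by positivity)]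
  have h1 : ‖zc c‖ ^ (2 * j + n) = ‖zc c‖ ^ n * (‖zc c‖ ^ 2) ^ j := by
    rw [← pow_mul, ← pow_add]; ring_nf
  rw [h1]
  have h2 : (1:ℝ) ≤ (j + n).factorial := by exact_mod_cast Nat.one_le_iff_ne_zero.2 (Nat.factorial_ne_zero _)
  have h3 : (0:ℝ) < j.factorial := by positivity
  calc ‖zc c‖ ^ n * (‖zc c‖ ^ 2) ^ j
      = ‖zc c‖ ^ n * ((‖zc c‖ ^ 2) ^ j / j.factorial) * j.factorial := by field_simp
    _ ≤ ‖zc c‖ ^ n * ((‖zc c‖ ^ 2) ^ j / j.factorial) * (j.factorial * (j+n).factorial) := by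
        apply mul_le_mul_of_nonneg_left _ (by positivity)
        nlinarith

lemma summable_Bterm (c : ℝ) (n : ℕ) :
    Summable (fun j : ℕ => zc c ^ (2 * j + n) / ((j.factorial : ℂ) * ((j + n).factorial : ℂ))) :=
  (summable_Bterm_norm c n).of_norm

def Eq1 : ℤ × ℕ ≃ ℕ × ℕ where
  toFun x := (x.2 + x.1.toNat, x.2 + (-x.1).toNat)
  invFun y := ((y.1 : ℤ) - (y.2 : ℤ), min y.1 y.2)
  left_inv := by rintro ⟨l, j⟩; simp only [Prod.mk.injEq]; constructor <;> omega
  right_inv := by rintro ⟨p, q⟩; simp only [Prod.mk.injEq]; constructor <;> omega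

lemma expansion (c θ : ℝ) :
    ∑' l : ℤ, B c l.natAbs * e (l * θ) = e (2 * c * Real.cos (2 * Real.pi * θ)) := by
  obtain ⟨u, hu⟩ : ∃ u : ℂ, u = e θ := ⟨_, rfl⟩
  have hu0 : u ≠ 0 := by rw [hu, e]; exact Complex.exp_ne_zero _
  -- step A
  have hA : e (2 * c * Real.cos (2 * Real.pi * θ)) = Complex.exp (zc c * u + zc c * u⁻¹) := by
    have h1 : u⁻¹ = Complex.exp (-(2 * Real.pi * Complex.I * θ)) := by
      rw [hu, e, ← Complex.exp_neg]
    have h2 : zc c * u + zc c * u⁻¹ = zc c * (u + u⁻¹) := by ring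
    have h3 : u + u⁻¹ = 2 * Complex.cos (2 * Real.pi * θ : ℝ) := by
      rw [h1, hu, e, Complex.two_cos]
      congr 2
      · push_cast; ring
      · push_cast; ring
    rw [h2, h3, e]
    congr 1
    rw [← Complex.ofReal_cos, zc]
    push_cast; ring
  -- step B: exponential series
  have hsf : Summable fun p : ℕ => ‖(zc c * u) ^ p / (p.factorial : ℂ)‖ := by
    refine (Real.summable_pow_div_factorial ‖zc c‖).congr fun p => ?_
    rw [norm_div, norm_pow, norm_mul, hu, e_norm, mul_one, Complex.norm_natCast]
  have hsg : Summable fun q : ℕ => ‖(zc c * u⁻¹) ^ q / (q.factorial : ℂ)‖ := by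
    refine (Real.summable_pow_div_factorial ‖zc c‖).congr fun q => ?_
    rw [norm_div, norm_pow, norm_mul, norm_inv, hu, e_norm, inv_one, mul_one, Complex.norm_natCast]
  have hB : Complex.exp (zc c * u + zc c * u⁻¹)
      = ∑' pq : ℕ × ℕ, (zc c * u) ^ pq.1 / (pq.1.factorial : ℂ)
          * ((zc c * u⁻¹) ^ pq.2 / (pq.2.factorial : ℂ)) := by
    rw [Complex.exp_add, Complex.exp_eq_exp_ℂ, NormedSpace.exp_eq_tsum_div,
      ← tsum_mul_tsum_of_summable_norm (f := fun p : ℕ => (zc c * u) ^ p / (p.factorial : ℂ))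
        (g := fun q : ℕ => (zc c * u⁻¹) ^ q / (q.factorial : ℂ)) hsf hsg]
  -- reindex
  have hsum2 : Summable fun pq : ℕ × ℕ => (zc c * u) ^ pq.1 / (pq.1.factorial : ℂ)
      * ((zc c * u⁻¹) ^ pq.2 / (pq.2.factorial : ℂ)) :=
    summable_mul_of_summable_norm (f := fun p : ℕ => (zc c * u) ^ p / (p.factorial : ℂ))
      (g := fun q : ℕ => (zc c * u⁻¹) ^ q / (q.factorial : ℂ)) hsf hsg
  have hre : (∑' pq : ℕ × ℕ, (zc c * u) ^ pq.1 / (pq.1.factorial : ℂ)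
          * ((zc c * u⁻¹) ^ pq.2 / (pq.2.factorial : ℂ)))
      = ∑' x : ℤ × ℕ, (zc c * u) ^ (Eq1 x).1 / (((Eq1 x).1.factorial : ℂ))
          * ((zc c * u⁻¹) ^ (Eq1 x).2 / (((Eq1 x).2.factorial : ℂ))) :=
    (Eq1.tsum_eq (fun pq : ℕ × ℕ => (zc c * u) ^ pq.1 / ((pq.1.factorial : ℂ))
          * ((zc c * u⁻¹) ^ pq.2 / ((pq.2.factorial : ℂ))))).symm
  -- identify terms
  have hterm : ∀ l : ℤ, ∀ j : ℕ, (zc c * u) ^ (Eq1 (l,j)).1 / (((Eq1 (l,j)).1.factorial : ℂ))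
          * ((zc c * u⁻¹) ^ (Eq1 (l,j)).2 / (((Eq1 (l,j)).2.factorial : ℂ)))
      = zc c ^ (2 * j + l.natAbs) / ((j.factorial : ℂ) * ((j + l.natAbs).factorial : ℂ))
          * e (l * θ) := by
    intro l j
    have hel : e (l * θ) = u ^ l := by
      rw [hu, e, e, ← Complex.exp_int_mul]
      congr 1
      push_cast; ring
    simp only [Eq1, Equiv.coe_fn_mk]
    rw [mul_pow, mul_pow, inv_pow, div_mul_div_comm]
    have hp : (j + l.toNat) + (j + (-l).toNat) = 2 * j + l.natAbs := by omega
    have hup : u ^ (j + l.toNat) * (u ^ (j + (-l).toNat))⁻¹ = u ^ l := by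
      rw [← zpow_natCast u (j + l.toNat), ← zpow_natCast u (j + (-l).toNat), ← zpow_neg,
        ← zpow_add₀ hu0]
      congr 1
      omega
    have hfac : ((j + l.toNat).factorial : ℂ) * ((j + (-l).toNat).factorial : ℂ)
        = (j.factorial : ℂ) * ((j + l.natAbs).factorial : ℂ) := by
      have : (j + l.toNat = j + l.natAbs ∧ j + (-l).toNat = j) ∨
          (j + l.toNat = j ∧ j + (-l).toNat = j + l.natAbs) := by omega
      rcases this with ⟨h1, h2⟩ | ⟨h1, h2⟩ <;> rw [h1, h2] <;> ring
    calc zc c ^ (j + l.toNat) * u ^ (j + l.toNat) * (zc c ^ (j + (-l).toNat) * (u ^ (j + (-l).toNat))⁻¹)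
          / (((j + l.toNat).factorial : ℂ) * ((j + (-l).toNat).factorial : ℂ))
        = zc c ^ ((j + l.toNat) + (j + (-l).toNat)) * (u ^ (j + l.toNat) * (u ^ (j + (-l).toNat))⁻¹)
          / (((j + l.toNat).factorial : ℂ) * ((j + (-l).toNat).factorial : ℂ)) := by
          rw [pow_add]; ring
      _ = zc c ^ (2 * j + l.natAbs) / ((j.factorial : ℂ) * ((j + l.natAbs).factorial : ℂ)) * e (l * θ) := by
          rw [hp, hup, hfac, hel]; ring
  -- sum over fibers
  have hsum3 : Summable fun x : ℤ × ℕ => (zc c * u) ^ (Eq1 x).1 / (((Eq1 x).1.factorial : ℂ))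
          * ((zc c * u⁻¹) ^ (Eq1 x).2 / (((Eq1 x).2.factorial : ℂ))) :=
    hsum2.comp_injective Eq1.injective
  have hfib : (∑' x : ℤ × ℕ, (zc c * u) ^ (Eq1 x).1 / (((Eq1 x).1.factorial : ℂ))
          * ((zc c * u⁻¹) ^ (Eq1 x).2 / (((Eq1 x).2.factorial : ℂ))))
      = ∑' l : ℤ, ∑' j : ℕ, (zc c * u) ^ (Eq1 (l,j)).1 / (((Eq1 (l,j)).1.factorial : ℂ))
          * ((zc c * u⁻¹) ^ (Eq1 (l,j)).2 / (((Eq1 (l,j)).2.factorial : ℂ))) :=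
    Summable.tsum_prod' hsum3 fun l => hsum3.prod_factor l
  rw [hA, hB, hre, hfib]
  refine tsum_congr fun l => ?_
  have : ∀ j : ℕ, (zc c * u) ^ (Eq1 (l,j)).1 / (((Eq1 (l,j)).1.factorial : ℂ))
          * ((zc c * u⁻¹) ^ (Eq1 (l,j)).2 / (((Eq1 (l,j)).2.factorial : ℂ)))
      = zc c ^ (2 * j + l.natAbs) / ((j.factorial : ℂ) * ((j + l.natAbs).factorial : ℂ)) * e (l * θ) :=
    hterm l
  rw [tsum_congr this, tsum_mul_right, B]

-- chunk 2: norm bounds on B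
lemma choose_le_two_pow' (n k : ℕ) : n.choose k ≤ 2 ^ n := by
  rcases le_or_gt k n with h | h
  · calc n.choose k ≤ ∑ m ∈ Finset.range (n + 1), n.choose m :=
        Finset.single_le_sum (fun i _ => Nat.zero_le _) (Finset.mem_range.2 (by omega))
      _ = 2 ^ n := Nat.sum_range_choose n
  · rw [Nat.choose_eq_zero_of_lt h]; positivity

lemma factorial_ineq (j n : ℕ) :
    ((2 * j + n).factorial : ℝ) ≤ 2 ^ (2 * j + n) * (j.factorial * (j + n).factorial) := by
  have h := Nat.choose_mul_factorial_mul_factorial (show j ≤ 2 * j + n by omega)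
  have h2 : 2 * j + n - j = j + n := by omega
  rw [h2] at h
  have h3 : (2 * j + n).choose j ≤ 2 ^ (2 * j + n) := choose_le_two_pow' _ _
  calc ((2 * j + n).factorial : ℝ) = ((2 * j + n).choose j : ℝ) * j.factorial * (j + n).factorial := by
        exact_mod_cast congrArg (Nat.cast (R := ℝ)) h.symm
    _ ≤ 2 ^ (2 * j + n) * (j.factorial * (j + n).factorial) := by
        have : ((2 * j + n).choose j : ℝ) ≤ 2 ^ (2 * j + n) := by exact_mod_cast h3
        have h4 : (0:ℝ) ≤ j.factorial := by positivity
        have h5 : (0:ℝ) ≤ (j + n).factorial := by positivity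
        nlinarith [mul_le_mul_of_nonneg_right this (mul_nonneg h4 h5)]

/-- each B-term is at most `y^(2j+n)/(2j+n)!` where `y = 2‖zc c‖`. -/
lemma Bterm_le (c : ℝ) (n j : ℕ) :
    ‖zc c ^ (2 * j + n) / ((j.factorial : ℂ) * ((j + n).factorial : ℂ))‖
      ≤ (2 * ‖zc c‖) ^ (2 * j + n) / ((2 * j + n).factorial : ℝ) := by
  rw [Bterm_norm]
  rw [div_le_div_iff₀ (by positivity) (by positivity)]
  have h := factorial_ineq j n
  have hx : (0:ℝ) ≤ ‖zc c‖ := norm_nonneg _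
  calc ‖zc c‖ ^ (2 * j + n) * ((2 * j + n).factorial : ℝ)
      ≤ ‖zc c‖ ^ (2 * j + n) * (2 ^ (2 * j + n) * (j.factorial * (j + n).factorial)) := by
        apply mul_le_mul_of_nonneg_left h (by positivity)
    _ = (2 * ‖zc c‖) ^ (2 * j + n) * (j.factorial * (j + n).factorial) := by
        rw [mul_pow]; ring

/-- decay of `y^m/m!` beyond `n ≥ 2y`. -/
lemma pow_div_factorial_decay (y : ℝ) (hy : 0 ≤ y) (n : ℕ) (hn : 2 * y ≤ n) :
    ∀ m, n ≤ m → y ^ m / (m.factorial : ℝ) ≤ y ^ n / (n.factorial : ℝ) * (1/2) ^ (m - n) := by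
  intro m
  induction m with
  | zero => intro h; interval_cases n; simp
  | succ m ih =>
    intro h
    rcases Nat.lt_or_ge m n with h1 | h1
    · have : n = m + 1 := by omega
      subst this; simp
    · have hstep : y ^ (m+1) / ((m+1).factorial : ℝ) ≤ (1/2) * (y ^ m / (m.factorial : ℝ)) := by
        rw [Nat.factorial_succ, pow_succ]
        have hm1 : (0:ℝ) < m.factorial := by positivity
        have hy2 : 2 * y ≤ (m + 1 : ℝ) := by
          calc 2 * y ≤ (n:ℝ) := hn
            _ ≤ (m + 1 : ℝ) := by exact_mod_cast by omega
        have hm2 : (0:ℝ) < (m:ℝ) + 1 := by positivity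
        have key : y / ((m:ℝ) + 1) ≤ 1/2 := by
          rw [div_le_iff₀ hm2]; linarith
        have hrw : y ^ m * y / (((m+1 : ℕ) : ℝ) * (m.factorial : ℝ))
            = y ^ m / (m.factorial : ℝ) * (y / ((m:ℝ) + 1)) := by
          push_cast
          rw [div_mul_div_comm]
          ring
        rw [Nat.cast_mul, hrw]
        calc y ^ m / (m.factorial : ℝ) * (y / ((m:ℝ) + 1))
            ≤ y ^ m / (m.factorial : ℝ) * (1/2) := by
              apply mul_le_mul_of_nonneg_left key (by positivity)
          _ = 1/2 * (y ^ m / (m.factorial : ℝ)) := by ring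
      calc y ^ (m+1) / ((m+1).factorial : ℝ) ≤ (1/2) * (y ^ m / (m.factorial : ℝ)) := hstep
        _ ≤ (1/2) * (y ^ n / (n.factorial : ℝ) * (1/2) ^ (m - n)) := by
            apply mul_le_mul_of_nonneg_left (ih h1) (by norm_num)
        _ = y ^ n / (n.factorial : ℝ) * (1/2) ^ (m + 1 - n) := by
            have : m + 1 - n = (m - n) + 1 := by omega
            rw [this, pow_succ]; ring

lemma B_norm_le_coarse (c : ℝ) (n : ℕ) :
    ‖B c n‖ ≤ ‖zc c‖ ^ n / (n.factorial : ℝ) * Real.exp (‖zc c‖ ^ 2) := by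
  refine (norm_tsum_le_tsum_norm (summable_Bterm_norm c n)).trans ?_
  have hterm : ∀ j : ℕ, ‖zc c ^ (2 * j + n) / ((j.factorial : ℂ) * ((j + n).factorial : ℂ))‖
      ≤ ‖zc c‖ ^ n / (n.factorial : ℝ) * ((‖zc c‖ ^ 2) ^ j / (j.factorial : ℝ)) := by
    intro j
    rw [Bterm_norm]
    have h1 : ‖zc c‖ ^ (2 * j + n) = ‖zc c‖ ^ n * (‖zc c‖ ^ 2) ^ j := by
      rw [← pow_mul, ← pow_add]; ring_nf
    have h2 : ((n.factorial : ℝ)) * (j.factorial : ℝ) ≤ (j.factorial : ℝ) * ((j + n).factorial : ℝ) := by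
      have h3 : (n.factorial : ℝ) ≤ ((j + n).factorial : ℝ) := by
        exact_mod_cast Nat.factorial_le (by omega)
      have h4 : (1:ℝ) ≤ (j.factorial : ℝ) := by exact_mod_cast Nat.one_le_iff_ne_zero.2 (Nat.factorial_ne_zero _)
      nlinarith [(Nat.cast_pos (α := ℝ)).2 (Nat.factorial_pos n)]
    rw [h1, div_mul_div_comm]
    exact div_le_div_of_nonneg_left (by positivity) (by positivity) h2
  refine (Summable.tsum_le_tsum hterm (summable_Bterm_norm c n)
    ((Real.summable_pow_div_factorial (‖zc c‖ ^ 2)).mul_left _)).trans ?_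
  rw [tsum_mul_left]
  apply mul_le_mul_of_nonneg_left _ (by positivity)
  rw [Real.exp_eq_exp_ℝ, NormedSpace.exp_eq_tsum_div]

lemma summable_B_nat (c : ℝ) : Summable (fun n : ℕ => ‖B c n‖) := by
  refine Summable.of_nonneg_of_le (fun n => norm_nonneg _) (fun n => B_norm_le_coarse c n)
    (((Real.summable_pow_div_factorial ‖zc c‖).mul_right _))

lemma summable_B_int (c : ℝ) : Summable (fun l : ℤ => ‖B c l.natAbs‖) := by
  refine Summable.of_nat_of_neg ?_ ?_ <;>
    · apply (summable_B_nat c).congr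
      intro n
      simp

lemma summable_B_mul_e (c : ℝ) (f : ℤ → ℝ) :
    Summable (fun l : ℤ => B c l.natAbs * e (f l)) := by
  apply Summable.of_norm
  refine (summable_B_int c).congr fun l => ?_
  rw [norm_mul, e_norm, mul_one]

/-- refined bound: for `n ≥ 2·(2‖zc c‖)`, `‖B c n‖ ≤ 2 y^n/n!` with `y = 2‖zc c‖`. -/
lemma B_norm_le_tail (c : ℝ) (n : ℕ) (hn : 2 * (2 * ‖zc c‖) ≤ n) :
    ‖B c n‖ ≤ 2 * ((2 * ‖zc c‖) ^ n / (n.factorial : ℝ)) := by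
  set y := 2 * ‖zc c‖ with hy
  have hy0 : 0 ≤ y := by positivity
  refine (norm_tsum_le_tsum_norm (summable_Bterm_norm c n)).trans ?_
  have hterm : ∀ j : ℕ, ‖zc c ^ (2 * j + n) / ((j.factorial : ℂ) * ((j + n).factorial : ℂ))‖
      ≤ y ^ n / (n.factorial : ℝ) * (1/4) ^ j := by
    intro j
    refine (Bterm_le c n j).trans ?_
    have := pow_div_factorial_decay y hy0 n hn (2 * j + n) (by omega)
    have h2 : 2 * j + n - n = 2 * j := by omega
    rw [h2] at this
    refine this.trans ?_
    apply mul_le_mul_of_nonneg_left _ (by positivity)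
    rw [pow_mul]
    norm_num
  refine (Summable.tsum_le_tsum hterm (summable_Bterm_norm c n)
    ((summable_geometric_of_lt_one (by norm_num) (by norm_num)).mul_left _)).trans ?_
  rw [tsum_mul_left, tsum_geometric_of_lt_one (by norm_num) (by norm_num)]
  rw [show ((1:ℝ) - 1/4)⁻¹ = 4/3 by norm_num]
  have : (0:ℝ) ≤ y ^ n / (n.factorial : ℝ) := by positivity
  nlinarith
-- chunk 3: |B c n| ≤ 1 via Fourier integral
lemma e_nnnorm (x : ℝ) : ‖e x‖₊ = 1 := by
  ext; rw [coe_nnnorm, e_norm, NNReal.coe_one]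

lemma continuous_e_mul (r : ℝ) : Continuous fun t : ℝ => e (r * t) := by
  unfold e
  fun_prop

lemma integral_e_int (m : ℤ) : (∫ t in (0:ℝ)..1, e (m * t)) = if m = 0 then 1 else 0 := by
  have hfun : ∀ t : ℝ, e (m * t) = Complex.exp ((2 * Real.pi * Complex.I * m) * t) := by
    intro t; rw [e]; push_cast; ring_nf
  rw [intervalIntegral.integral_congr (fun t _ => hfun t)]
  split_ifs with h
  · subst h
    simp
  · have hc : (2 * (Real.pi:ℂ) * Complex.I * m) ≠ 0 := by
      have h1 : ((m:ℂ)) ≠ 0 := Int.cast_ne_zero.2 h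
      have h2 : ((Real.pi:ℂ)) ≠ 0 := Complex.ofReal_ne_zero.2 Real.pi_ne_zero
      simp [Complex.I_ne_zero, h1, h2]
    rw [integral_exp_mul_complex hc]
    have h1 : (2 * (Real.pi:ℂ) * Complex.I * m) * (1:ℝ) = m * (2 * Real.pi * Complex.I) := by
      push_cast; ring
    have h2 : (2 * (Real.pi:ℂ) * Complex.I * m) * ((0:ℝ):ℂ) = 0 := by
      push_cast; ring
    rw [h1, h2, Complex.exp_int_mul_two_pi_mul_I, Complex.exp_zero, sub_self, zero_div]

lemma B_eq_integral (c : ℝ) (l : ℤ) :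
    B c l.natAbs = ∫ t in (0:ℝ)..1, e (2 * c * Real.cos (2 * Real.pi * t)) * e (-(l:ℝ) * t) := by
  have hpt : ∀ t : ℝ, e (2 * c * Real.cos (2 * Real.pi * t)) * e (-(l:ℝ) * t)
      = ∑' l' : ℤ, B c l'.natAbs * e (((l' - l : ℤ) : ℝ) * t) := by
    intro t
    rw [← expansion c t, ← tsum_mul_right]
    refine tsum_congr fun l' => ?_
    rw [mul_assoc, ← e_add]
    congr 1
    push_cast; ring
  rw [intervalIntegral.integral_congr (fun t _ => hpt t)]
  rw [intervalIntegral.integral_of_le zero_le_one]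
  rw [MeasureTheory.integral_tsum (fun i => (Continuous.aestronglyMeasurable (by
        exact (continuous_const.mul (continuous_e_mul _))))) ?h2]
  case h2 =>
    have hval : ∀ i : ℤ, (∫⁻ t in Set.Ioc (0:ℝ) 1,
        ‖B c i.natAbs * e (((i - l : ℤ) : ℝ) * t)‖₊) = (‖B c i.natAbs‖₊ : ENNReal) := by
      intro i
      have : ∀ t : ℝ, (‖B c i.natAbs * e (((i - l : ℤ) : ℝ) * t)‖₊ : ENNReal)
          = (‖B c i.natAbs‖₊ : ENNReal) := by
        intro t; rw [nnnorm_mul, e_nnnorm, mul_one]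
      rw [MeasureTheory.lintegral_congr this, MeasureTheory.lintegral_const,
        MeasureTheory.Measure.restrict_apply_univ, Real.volume_Ioc]
      norm_num
    simp only [enorm_eq_nnnorm]
    rw [tsum_congr hval]
    exact ENNReal.tsum_coe_ne_top_iff_summable.2 ((summable_B_int c).toNNReal.congr
      (fun i => by rw [Real.toNNReal_of_nonneg (norm_nonneg _)]; ext; simp [coe_nnnorm]))
  -- now each integral
  have heach : ∀ i : ℤ, (∫ t in Set.Ioc (0:ℝ) 1, B c i.natAbs * e (((i - l : ℤ) : ℝ) * t))
      = B c i.natAbs * (if i - l = 0 then 1 else 0) := by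
    intro i
    rw [MeasureTheory.integral_const_mul, ← intervalIntegral.integral_of_le zero_le_one,
      integral_e_int]
  rw [tsum_congr heach]
  rw [tsum_eq_single l (fun l' hl' => by rw [if_neg (by omega), mul_zero])]
  rw [if_pos (by omega), mul_one]

lemma B_le_one (c : ℝ) (n : ℕ) : ‖B c n‖ ≤ 1 := by
  have h := B_eq_integral c (n : ℤ)
  rw [Int.natAbs_natCast] at h
  rw [h]
  have := intervalIntegral.norm_integral_le_of_norm_le_const (a := (0:ℝ)) (b := 1) (C := 1)
    (f := fun t => e (2 * c * Real.cos (2 * Real.pi * t)) * e (-((n:ℤ):ℝ) * t))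
    (fun t _ => by rw [norm_mul, e_norm, e_norm, mul_one])
  simpa using this
-- chunk 4: total sum of coefficients
lemma tsum_B_le (c C : ℝ) (hC : 1 ≤ C) (hc : |c| ≤ C) :
    ∑' l : ℤ, ‖B c l.natAbs‖ ≤ 1000 * C ^ 2 := by
  set y := 2 * ‖zc c‖ with hy
  have hy0 : 0 ≤ y := by positivity
  have hy13 : y ≤ 13 * C := by
    rw [hy, zc_norm]
    nlinarith [Real.pi_lt_d2, Real.pi_pos, abs_nonneg c]
  set M := Nat.ceil (y ^ 2) with hM
  have hyM : y ^ 2 ≤ M := Nat.le_ceil _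
  have hM1 : (M : ℝ) ≤ y ^ 2 + 1 := (Nat.ceil_lt_add_one (by positivity)).le
  have h2y : 2 * y ≤ (2 * M + 1 : ℕ) := by
    push_cast
    nlinarith [sq_nonneg (y - 1)]
  -- bound for the ℕ-indexed sum
  have hnat : ∑' n : ℕ, ‖B c n‖ ≤ (2 * M + 1) + 4 * y := by
    rw [← Summable.sum_add_tsum_nat_add (2 * M + 1) (summable_B_nat c)]
    have hpart1 : ∑ i ∈ Finset.range (2 * M + 1), ‖B c i‖ ≤ (2 * M + 1 : ℝ) := by
      calc ∑ i ∈ Finset.range (2 * M + 1), ‖B c i‖ ≤ ∑ i ∈ Finset.range (2 * M + 1), 1 :=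
            Finset.sum_le_sum fun i _ => B_le_one c i
        _ = (2 * M + 1 : ℝ) := by simp
    have hterm : ∀ j : ℕ, ‖B c (j + (2 * M + 1))‖
        ≤ 2 * (y ^ (2 * M + 1) / ((2 * M + 1).factorial : ℝ)) * (1/2) ^ j := by
      intro j
      have h1 : ‖B c (j + (2 * M + 1))‖ ≤ 2 * (y ^ (j + (2*M+1)) / ((j + (2*M+1)).factorial : ℝ)) := by
        refine B_norm_le_tail c _ ?_
        calc 2 * (2 * ‖zc c‖) = 2 * y := by rw [hy]
          _ ≤ (2 * M + 1 : ℕ) := h2y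
          _ ≤ ((j + (2 * M + 1) : ℕ) : ℝ) := by exact_mod_cast by omega
      refine h1.trans ?_
      have h2 := pow_div_factorial_decay y hy0 (2 * M + 1) h2y (j + (2 * M + 1)) (by omega)
      have h3 : j + (2 * M + 1) - (2 * M + 1) = j := by omega
      rw [h3] at h2
      nlinarith [h2]
    have hgeo : Summable (fun j : ℕ => 2 * (y ^ (2 * M + 1) / ((2 * M + 1).factorial : ℝ)) * (1/2) ^ j) :=
      (summable_geometric_of_lt_one (by norm_num) (by norm_num)).mul_left _
    have hsum2 : ∑' j : ℕ, ‖B c (j + (2 * M + 1))‖ ≤ 4 * (y ^ (2 * M + 1) / ((2 * M + 1).factorial : ℝ)) := by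
      refine (Summable.tsum_le_tsum hterm ((summable_B_nat c).comp_injective (add_left_injective _)) hgeo).trans ?_
      rw [tsum_mul_left, tsum_geometric_of_lt_one (by norm_num) (by norm_num)]
      rw [show ((1:ℝ) - 1/2)⁻¹ = 2 by norm_num]
      ring_nf
      exact le_refl _
    have hlast : y ^ (2 * M + 1) / ((2 * M + 1).factorial : ℝ) ≤ y := by
      have hfac : ((y ^ 2) ^ M : ℝ) ≤ ((2 * M + 1).factorial : ℝ) := by
        have h1 : (M.factorial) * (M + 1) ^ (M + 1) ≤ (M + (M + 1)).factorial :=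
          Nat.factorial_mul_pow_le_factorial
        have h2 : M + (M + 1) = 2 * M + 1 := by omega
        rw [h2] at h1
        have h3 : M ^ M ≤ (2 * M + 1).factorial := by
          calc M ^ M ≤ (M + 1) ^ (M + 1) := by
                calc M ^ M ≤ (M + 1) ^ M := Nat.pow_le_pow_left (by omega) M
                  _ ≤ (M + 1) ^ (M + 1) := Nat.pow_le_pow_right (by omega) (by omega)
            _ ≤ M.factorial * (M + 1) ^ (M + 1) := Nat.le_mul_of_pos_left _ (Nat.factorial_pos M)
            _ ≤ (2 * M + 1).factorial := h1
        calc ((y ^ 2) ^ M : ℝ) ≤ (M : ℝ) ^ M := pow_le_pow_left₀ (by positivity) hyM M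
          _ ≤ ((2 * M + 1).factorial : ℝ) := by exact_mod_cast h3
      have hfacpos : (0:ℝ) < ((2 * M + 1).factorial : ℝ) := by positivity
      rw [div_le_iff₀ hfacpos]
      calc y ^ (2 * M + 1) = y * (y ^ 2) ^ M := by rw [← pow_mul]; ring
        _ ≤ y * ((2 * M + 1).factorial : ℝ) := by
            apply mul_le_mul_of_nonneg_left hfac hy0
    have : ∑' j : ℕ, ‖B c (j + (2 * M + 1))‖ ≤ 4 * y := by
      refine hsum2.trans ?_
      nlinarith [hlast]
    linarith
  -- combine to ℤ
  have hZ : ∑' l : ℤ, ‖B c l.natAbs‖ ≤ 2 * ∑' n : ℕ, ‖B c n‖ := by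
    have hs1 : Summable fun n : ℕ => ‖B c (n : ℤ).natAbs‖ := by
      refine (summable_B_nat c).congr fun n => by simp
    have hs2 : Summable fun n : ℕ => ‖B c (-(n:ℤ)).natAbs‖ := by
      refine (summable_B_nat c).congr fun n => by simp
    rw [Summable.tsum_of_nat_of_neg hs1 hs2]
    have e1 : ∑' n : ℕ, ‖B c (n : ℤ).natAbs‖ = ∑' n : ℕ, ‖B c n‖ := tsum_congr fun n => by simp
    have e2 : ∑' n : ℕ, ‖B c (-(n:ℤ)).natAbs‖ = ∑' n : ℕ, ‖B c n‖ := tsum_congr fun n => by simp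
    rw [e1, e2]
    have : (0:ℝ) ≤ ‖B c (0:ℤ).natAbs‖ := norm_nonneg _
    linarith
  refine hZ.trans ?_
  have : (2:ℝ) * ((2 * M + 1) + 4 * y) ≤ 1000 * C ^ 2 := by
    have hM2 : (M:ℝ) ≤ (13 * C)^2 + 1 := by nlinarith
    nlinarith [hy13, hy0, hC]
  linarith
-- chunk 5: induction removing cosine phases
lemma remove_lemma (N : ℕ) (a : ℕ → ℂ) (ha : ∀ n, ‖a n‖ ≤ 1) (K : ℕ)
    (θ : ℕ → ℝ) (c : ℕ → ℝ) (C : ℝ) (hC : 1 ≤ C)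
    (hc : ∀ k ∈ Finset.Icc 1 (K - 1), |c k| ≤ C) (S : ℝ)
    (hS : ∀ l : ℕ → ℤ, ‖∑ n ∈ Finset.Icc 1 N,
        a n * e ((n : ℝ) * ∑ k ∈ Finset.Icc 1 (K - 1), (l k : ℝ) * θ k)‖ ≤ S) :
    ∀ s : Finset ℕ, s ⊆ Finset.Icc 1 (K - 1) → ∀ l : ℕ → ℤ,
      ‖∑ n ∈ Finset.Icc 1 N, a n * e ((∑ k ∈ s, 2 * c k * Real.cos (2 * Real.pi * (n * θ k)))
          + (n : ℝ) * ∑ k ∈ Finset.Icc 1 (K - 1), (l k : ℝ) * θ k)‖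
        ≤ (1000 * C ^ 2) ^ s.card * S := by
  have hS0 : 0 ≤ S := le_trans (norm_nonneg _) (hS 0)
  intro s
  induction s using Finset.induction_on with
  | empty => intro _ l; simpa using hS l
  | @insert k₀ s' hk₀ ih =>
    intro hsub l
    have hk₀mem : k₀ ∈ Finset.Icc 1 (K - 1) := hsub (Finset.mem_insert_self _ _)
    have hs'sub : s' ⊆ Finset.Icc 1 (K - 1) := fun x hx => hsub (Finset.mem_insert_of_mem hx)
    have hcK : |c k₀| ≤ C := hc k₀ hk₀mem
    -- rewrite each term as a tsum
    have hterm : ∀ n : ℕ,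
        a n * e ((∑ k ∈ insert k₀ s', 2 * c k * Real.cos (2 * Real.pi * (n * θ k)))
            + (n : ℝ) * ∑ k ∈ Finset.Icc 1 (K - 1), (l k : ℝ) * θ k)
        = ∑' m : ℤ, B (c k₀) m.natAbs *
            (a n * e ((∑ k ∈ s', 2 * c k * Real.cos (2 * Real.pi * (n * θ k)))
              + (n : ℝ) * ((∑ k ∈ Finset.Icc 1 (K - 1), (l k : ℝ) * θ k) + (m : ℝ) * θ k₀))) := by
      intro n
      rw [Finset.sum_insert hk₀]
      have hsplit : (2 * c k₀ * Real.cos (2 * Real.pi * (n * θ k₀))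
            + ∑ k ∈ s', 2 * c k * Real.cos (2 * Real.pi * (n * θ k)))
          + (n : ℝ) * ∑ k ∈ Finset.Icc 1 (K - 1), (l k : ℝ) * θ k
          = (2 * c k₀ * Real.cos (2 * Real.pi * ((n : ℝ) * θ k₀)))
            + ((∑ k ∈ s', 2 * c k * Real.cos (2 * Real.pi * (n * θ k)))
              + (n : ℝ) * ∑ k ∈ Finset.Icc 1 (K - 1), (l k : ℝ) * θ k) := by ring
      rw [hsplit, e_add, ← expansion (c k₀) ((n : ℝ) * θ k₀), ← tsum_mul_right, ← tsum_mul_left]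
      refine tsum_congr fun m => ?_
      rw [mul_assoc, ← e_add]
      rw [show (m : ℝ) * ((n : ℝ) * θ k₀) + ((∑ k ∈ s', 2 * c k * Real.cos (2 * Real.pi * (n * θ k)))
            + (n : ℝ) * (∑ k ∈ Finset.Icc 1 (K - 1), (l k : ℝ) * θ k))
          = (∑ k ∈ s', 2 * c k * Real.cos (2 * Real.pi * (n * θ k)))
            + (n : ℝ) * ((∑ k ∈ Finset.Icc 1 (K - 1), (l k : ℝ) * θ k) + (m : ℝ) * θ k₀) from by ring]
      ring
    rw [Finset.sum_congr rfl (fun n _ => hterm n)]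
    -- swap finite sum and tsum
    have hsummand : ∀ n ∈ Finset.Icc 1 N, Summable fun m : ℤ => B (c k₀) m.natAbs *
        (a n * e ((∑ k ∈ s', 2 * c k * Real.cos (2 * Real.pi * (n * θ k)))
          + (n : ℝ) * ((∑ k ∈ Finset.Icc 1 (K - 1), (l k : ℝ) * θ k) + (m : ℝ) * θ k₀))) := by
      intro n _
      apply Summable.of_norm
      refine ((summable_B_int (c k₀)).mul_right (‖a n‖)).congr fun m => ?_
      rw [norm_mul, norm_mul, e_norm, mul_one]
    rw [← Summable.tsum_finsetSum hsummand]
    -- bound the tsum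
    have hinner : ∀ m : ℤ, ‖∑ n ∈ Finset.Icc 1 N,
        a n * e ((∑ k ∈ s', 2 * c k * Real.cos (2 * Real.pi * (n * θ k)))
          + (n : ℝ) * ((∑ k ∈ Finset.Icc 1 (K - 1), (l k : ℝ) * θ k) + (m : ℝ) * θ k₀))‖
        ≤ (1000 * C ^ 2) ^ s'.card * S := by
      intro m
      have := ih hs'sub (fun k => if k = k₀ then l k + m else l k)
      have hphase : ∑ k ∈ Finset.Icc 1 (K - 1),
          (((fun k => if k = k₀ then l k + m else l k) k : ℤ) : ℝ) * θ k
          = (∑ k ∈ Finset.Icc 1 (K - 1), (l k : ℝ) * θ k) + (m : ℝ) * θ k₀ := by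
        have hsplit : ∀ k ∈ Finset.Icc 1 (K - 1),
            (((if k = k₀ then l k + m else l k) : ℤ) : ℝ) * θ k
            = (l k : ℝ) * θ k + (if k = k₀ then (m : ℝ) * θ k else 0) := by
          intro k _
          split_ifs with h
          · push_cast; ring
          · push_cast; ring
        rw [Finset.sum_congr rfl hsplit, Finset.sum_add_distrib,
          Finset.sum_ite_eq' (Finset.Icc 1 (K - 1)) k₀ (fun k => (m : ℝ) * θ k),
          if_pos hk₀mem]
      rw [hphase] at this
      exact this
    -- sum of norms
    have hsummableH : Summable fun m : ℤ => ‖B (c k₀) m.natAbs *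
        ∑ n ∈ Finset.Icc 1 N, a n * e ((∑ k ∈ s', 2 * c k * Real.cos (2 * Real.pi * (n * θ k)))
          + (n : ℝ) * ((∑ k ∈ Finset.Icc 1 (K - 1), (l k : ℝ) * θ k) + (m : ℝ) * θ k₀))‖ := by
      refine Summable.of_nonneg_of_le (fun m => norm_nonneg _) (fun m => ?_)
        ((summable_B_int (c k₀)).mul_right ((1000 * C ^ 2) ^ s'.card * S))
      rw [norm_mul]
      exact mul_le_mul_of_nonneg_left (hinner m) (norm_nonneg _)
    have hsimp : ∀ m : ℤ, (∑ n ∈ Finset.Icc 1 N, B (c k₀) m.natAbs *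
        (a n * e ((∑ k ∈ s', 2 * c k * Real.cos (2 * Real.pi * (n * θ k)))
          + (n : ℝ) * ((∑ k ∈ Finset.Icc 1 (K - 1), (l k : ℝ) * θ k) + (m : ℝ) * θ k₀))))
        = B (c k₀) m.natAbs * ∑ n ∈ Finset.Icc 1 N,
            a n * e ((∑ k ∈ s', 2 * c k * Real.cos (2 * Real.pi * (n * θ k)))
              + (n : ℝ) * ((∑ k ∈ Finset.Icc 1 (K - 1), (l k : ℝ) * θ k) + (m : ℝ) * θ k₀)) := by
      intro m
      rw [Finset.mul_sum]
    rw [tsum_congr hsimp]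
    refine (norm_tsum_le_tsum_norm hsummableH).trans ?_
    have hbd : ∀ m : ℤ, ‖B (c k₀) m.natAbs *
        ∑ n ∈ Finset.Icc 1 N, a n * e ((∑ k ∈ s', 2 * c k * Real.cos (2 * Real.pi * (n * θ k)))
          + (n : ℝ) * ((∑ k ∈ Finset.Icc 1 (K - 1), (l k : ℝ) * θ k) + (m : ℝ) * θ k₀))‖
        ≤ ‖B (c k₀) m.natAbs‖ * ((1000 * C ^ 2) ^ s'.card * S) := by
      intro m
      rw [norm_mul]
      exact mul_le_mul_of_nonneg_left (hinner m) (norm_nonneg _)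
    refine (Summable.tsum_le_tsum hbd hsummableH
      ((summable_B_int (c k₀)).mul_right _)).trans ?_
    rw [tsum_mul_right]
    have h1000 : ∑' m : ℤ, ‖B (c k₀) m.natAbs‖ ≤ 1000 * C ^ 2 := tsum_B_le (c k₀) C hC hcK
    rw [Finset.card_insert_of_notMem hk₀, pow_succ]
    have hpos : (0 : ℝ) ≤ (1000 * C ^ 2) ^ s'.card * S :=
      mul_nonneg (pow_nonneg (by positivity) _) hS0
    calc (∑' m : ℤ, ‖B (c k₀) m.natAbs‖) * ((1000 * C ^ 2) ^ s'.card * S)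
        ≤ (1000 * C ^ 2) * ((1000 * C ^ 2) ^ s'.card * S) :=
          mul_le_mul_of_nonneg_right h1000 hpos
      _ = (1000 * C ^ 2) ^ s'.card * (1000 * C ^ 2) * S := by ring

theorem remove_all_cosine_phases :
    ∃ C₀ : ℝ, ∀ N : ℕ, 1 ≤ N → ∀ a : ℕ → ℂ, (∀ n, ‖a n‖ ≤ 1) →
      ∀ K : ℕ, 2 ≤ K → ∀ (θ : ℕ → ℝ) (c : ℕ → ℝ) (C : ℝ), 1 ≤ C →
        (∀ k ∈ Finset.Icc 1 (K - 1), |c k| ≤ C) →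
        ‖∑ n ∈ Finset.Icc 1 N,
            a n * e (∑ k ∈ Finset.Icc 1 (K - 1),
              2 * c k * Real.cos (2 * Real.pi * (n * θ k)))‖
          ≤ (C₀ * C ^ 2) ^ (K - 1) *
            ⨆ l : ℕ → ℤ, ‖∑ n ∈ Finset.Icc 1 N,
              a n * e ((n : ℝ) * ∑ k ∈ Finset.Icc 1 (K - 1), (l k : ℝ) * θ k)‖ := by
  refine ⟨1000, fun N hN a ha K hK θ c C hC hc => ?_⟩
  set S := ⨆ l : ℕ → ℤ, ‖∑ n ∈ Finset.Icc 1 N,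
      a n * e ((n : ℝ) * ∑ k ∈ Finset.Icc 1 (K - 1), (l k : ℝ) * θ k)‖ with hSdef
  have hb : ∀ l : ℕ → ℤ, ‖∑ n ∈ Finset.Icc 1 N,
      a n * e ((n : ℝ) * ∑ k ∈ Finset.Icc 1 (K - 1), (l k : ℝ) * θ k)‖ ≤ (N : ℝ) := by
    intro l
    calc ‖∑ n ∈ Finset.Icc 1 N, a n * e ((n : ℝ) * ∑ k ∈ Finset.Icc 1 (K - 1), (l k : ℝ) * θ k)‖
        ≤ ∑ n ∈ Finset.Icc 1 N, ‖a n * e ((n : ℝ) * ∑ k ∈ Finset.Icc 1 (K - 1), (l k : ℝ) * θ k)‖ :=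
          norm_sum_le _ _
      _ ≤ ∑ n ∈ Finset.Icc 1 N, 1 := Finset.sum_le_sum fun n _ => by
          rw [norm_mul, e_norm, mul_one]; exact ha n
      _ ≤ (N : ℝ) := by simp [Nat.card_Icc]
  have hbdd : BddAbove (Set.range fun l : ℕ → ℤ => ‖∑ n ∈ Finset.Icc 1 N,
      a n * e ((n : ℝ) * ∑ k ∈ Finset.Icc 1 (K - 1), (l k : ℝ) * θ k)‖) := by
    refine ⟨(N : ℝ), ?_⟩
    rintro x ⟨l, rfl⟩
    exact hb l
  have hS : ∀ l : ℕ → ℤ, ‖∑ n ∈ Finset.Icc 1 N,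
      a n * e ((n : ℝ) * ∑ k ∈ Finset.Icc 1 (K - 1), (l k : ℝ) * θ k)‖ ≤ S :=
    fun l => le_ciSup hbdd l
  have key := remove_lemma N a ha K θ c C hC hc S hS (Finset.Icc 1 (K - 1)) (le_refl _) 0
  have hzero : ∀ n : ℕ, ((∑ k ∈ Finset.Icc 1 (K - 1), 2 * c k * Real.cos (2 * Real.pi * (n * θ k)))
      + (n : ℝ) * ∑ k ∈ Finset.Icc 1 (K - 1), (((0 : ℕ → ℤ) k : ℝ)) * θ k)
      = ∑ k ∈ Finset.Icc 1 (K - 1), 2 * c k * Real.cos (2 * Real.pi * (n * θ k)) := by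
    intro n
    simp
  rw [Finset.sum_congr rfl (fun n _ => by rw [hzero n])] at key
  rwa [Nat.card_Icc, Nat.add_sub_cancel] at key
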